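/- Let F be a field, let D be a finite-dimensional division F-algebra with center F and D ≠ F, let m ∈ ℕ, and let A = M_m(D). Let τ : A → F be a nonzero F-linear functional. For a matrix t ∈ M_m(F) and d ∈ D, write t ⊗ d for the matrix in M_m(D) whose (i,j)-entry is t_{ij}·d. Then for every nonzero a ∈ A and every invertible matrix t ∈ M_m(F), there exists a nonzero d ∈ D such that both h₁ = a·(t⁻¹ ⊗ d⁻¹) and h₂ = t ⊗ d lie in ker τ; in particular a = h₁h₂ with h₁, h₂ ∈ ker τ. -/

import Mathlib

open Module

/-- The "tensor" map `d ↦ t ⊗ d` as an `F`-linear map. -/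
private def tensL {F : Type*} [Field F] {D : Type*} [DivisionRing D] [Algebra F D] {m : ℕ}
    (t : Matrix (Fin m) (Fin m) F) : D →ₗ[F] Matrix (Fin m) (Fin m) D where
  toFun d := Matrix.of fun i j => t i j • d
  map_add' d e := by ext i j; simp [smul_add]
  map_smul' r d := by
    ext i j
    simp only [Matrix.smul_apply, Matrix.of_apply, RingHom.id_apply]
    exact smul_comm _ _ _

/-- Key lemma: for a noncommutative finite-dimensional central division algebra `D` over `F`
and any two linear functionals `f g : D → F` there is `d ≠ 0` with `f d = 0` and `g d⁻¹ = 0`. -/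
private lemma key_lemma {F : Type*} [Field F] {D : Type*} [DivisionRing D] [Algebra F D]
    [FiniteDimensional F D]
    (hcenter : Subalgebra.center F D = ⊥)
    (hD : (⊥ : Subalgebra F D) ≠ ⊤)
    (f g : D →ₗ[F] F) : ∃ d : D, d ≠ 0 ∧ f d = 0 ∧ g d⁻¹ = 0 := by
  -- pick a non-scalar element `s`
  obtain ⟨s, hs⟩ : ∃ s : D, s ∉ (⊥ : Subalgebra F D) := by
    by_contra h
    push_neg at h
    exact hD (eq_top_iff.mpr fun x _ => h x)
  set L : Subalgebra F D := Algebra.adjoin F {s} with hLdef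
  have hsL : s ∈ L := Algebra.self_mem_adjoin_singleton F s
  -- `L ≠ ⊤` (else `s` would be central)
  have hLtop : L ≠ ⊤ := by
    intro h
    apply hs
    rw [← hcenter]
    refine Subalgebra.mem_center_iff.mpr fun x => ?_
    have hx : x ∈ L := h ▸ Algebra.mem_top
    exact (Algebra.commute_of_mem_adjoin_self hx).symm.eq
  have hLlt : finrank F L < finrank F D := by
    have : Subalgebra.toSubmodule L < ⊤ := by
      refine lt_top_iff_ne_top.mpr fun h => hLtop ?_
      ext x
      simp only [Algebra.mem_top, iff_true]
      have : x ∈ Subalgebra.toSubmodule L := h ▸ Submodule.mem_top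
      exact this
    simpa using Submodule.finrank_lt_finrank_of_lt (t := (⊤ : Submodule F D)) this
  have hL2 : 2 ≤ finrank F L := by
    have hlt : Subalgebra.toSubmodule (⊥ : Subalgebra F D) < Subalgebra.toSubmodule L := by
      refine lt_of_le_of_ne ?_ fun h => ?_
      · intro x hx
        exact (show (⊥ : Subalgebra F D) ≤ L from bot_le) hx
      · apply hs
        have : s ∈ Subalgebra.toSubmodule L := hsL
        rw [← h] at this
        exact this
    have h1 := Submodule.finrank_lt_finrank_of_lt hlt
    have hbot : finrank F (Subalgebra.toSubmodule (⊥ : Subalgebra F D)) = 1 := by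
      simpa using Subalgebra.finrank_bot (F := F) (E := D)
    have hEq : finrank F (Subalgebra.toSubmodule L) = finrank F L := rfl
    omega
  -- the map `c ↦ (x ↦ f (c * x))` has nontrivial kernel
  let Φ : D →ₗ[F] (L →ₗ[F] F) :=
    { toFun := fun c =>
        { toFun := fun x => f (c * (x : D))
          map_add' := fun x y => by simp [mul_add]
          map_smul' := fun r x => by simp [mul_smul_comm] }
      map_add' := fun c c' => by ext x; simp [add_mul]
      map_smul' := fun r c => by ext x; simp [smul_mul_assoc] }
  obtain ⟨c, hcmem, hc0⟩ : ∃ c ∈ LinearMap.ker Φ, c ≠ 0 := by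
    rw [← Submodule.ne_bot_iff]
    intro hker
    have hinj : Function.Injective Φ := LinearMap.ker_eq_bot.mp hker
    have := LinearMap.finrank_le_finrank_of_injective hinj
    rw [Module.finrank_linearMap, finrank_self, mul_one] at this
    omega
  have hfc : ∀ x : L, f (c * (x : D)) = 0 := by
    intro x
    have := LinearMap.mem_ker.mp hcmem
    have := congrArg (fun (φ : L →ₗ[F] F) => φ x) this
    simpa [Φ] using this
  -- the map `y ↦ g (y * c⁻¹)` on `L` has nontrivial kernel
  let ψ : L →ₗ[F] F :=
    { toFun := fun y => g ((y : D) * c⁻¹)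
      map_add' := fun x y => by simp [add_mul]
      map_smul' := fun r x => by simp [smul_mul_assoc] }
  obtain ⟨y, hymem, hy0⟩ : ∃ y ∈ LinearMap.ker ψ, y ≠ 0 := by
    rw [← Submodule.ne_bot_iff]
    intro hker
    have : finrank F L ≤ finrank F F := by
      have hinj : Function.Injective ψ := LinearMap.ker_eq_bot.mp hker
      exact LinearMap.finrank_le_finrank_of_injective hinj
    rw [finrank_self] at this
    omega
  have hyD : (y : D) ≠ 0 := by
    simpa using hy0
  -- `y⁻¹ ∈ L` : left multiplication by `y` on `L` is bijective
  have hinvL : (y : D)⁻¹ ∈ L := by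
    let μ : L →ₗ[F] L :=
      { toFun := fun x => ⟨(y : D) * (x : D), mul_mem y.2 x.2⟩
        map_add' := fun x z => by ext; simp [mul_add]
        map_smul' := fun r x => by ext; simp [mul_smul_comm] }
    have hμinj : Function.Injective μ := by
      intro x z hxz
      have : (y : D) * (x : D) = (y : D) * (z : D) := congrArg Subtype.val hxz
      exact Subtype.ext (mul_left_cancel₀ hyD this)
    have hμsurj : Function.Surjective μ := LinearMap.surjective_of_injective hμinj
    obtain ⟨z, hz⟩ := hμsurj 1
    have hz' : (y : D) * (z : D) = 1 := congrArg Subtype.val hz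
    have : (y : D)⁻¹ = (z : D) := inv_eq_of_mul_eq_one_right hz'
    rw [this]; exact z.2
  refine ⟨c * (y : D)⁻¹, ?_, ?_, ?_⟩
  · exact mul_ne_zero hc0 (inv_ne_zero hyD)
  · simpa using hfc ⟨(y : D)⁻¹, hinvL⟩
  · rw [mul_inv_rev, inv_inv]
    have := LinearMap.mem_ker.mp hymem
    simpa [ψ] using this

/-- With `D` a finite-dimensional central division `F`-algebra, `D ≠ F`,
`A = Mₘ(D)`, and `τ` a nonzero `F`-linear functional on `A`: for every nonzero `a ∈ A` and
every invertible `t ∈ Mₘ(F)`, there is a nonzero `d ∈ D` such that `h₁ = a·(t⁻¹ ⊗ d⁻¹)` and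
`h₂ = t ⊗ d` both lie in `ker τ`, and `a = h₁ h₂`.  Here `t ⊗ d` is the matrix with entries
`tᵢⱼ • d`. -/
theorem stmt_3 (F : Type*) [Field F] (D : Type*) [DivisionRing D] [Algebra F D]
    [FiniteDimensional F D]
    (hcenter : Subalgebra.center F D = ⊥)
    (hD : (⊥ : Subalgebra F D) ≠ ⊤)
    (m : ℕ)
    (τ : Matrix (Fin m) (Fin m) D →ₗ[F] F) (hτ : τ ≠ 0)
    (a : Matrix (Fin m) (Fin m) D) (ha : a ≠ 0)
    (t : Matrix (Fin m) (Fin m) F) (ht : IsUnit t) :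
    ∃ d : D, d ≠ 0 ∧
      a * (Matrix.of fun i j => t⁻¹ i j • d⁻¹) ∈ LinearMap.ker τ ∧
      (Matrix.of fun i j => t i j • d) ∈ LinearMap.ker τ ∧
      a = (a * (Matrix.of fun i j => t⁻¹ i j • d⁻¹)) * (Matrix.of fun i j => t i j • d) := by
  classical
  let f : D →ₗ[F] F := τ ∘ₗ tensL t
  let g : D →ₗ[F] F := τ ∘ₗ (LinearMap.mulLeft F a) ∘ₗ tensL t⁻¹
  obtain ⟨d, hd0, hf, hg⟩ := key_lemma hcenter hD f g
  have ht' : t⁻¹ * t = 1 := Matrix.nonsing_inv_mul t ((Matrix.isUnit_iff_isUnit_det t).mp ht)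
  have hdd : d⁻¹ * d = 1 := inv_mul_cancel₀ hd0
  have hXY : (Matrix.of fun i j => t⁻¹ i j • d⁻¹) * (Matrix.of fun i j => t i j • d) = 1 := by
    ext i k
    have hsum : ∑ j, (t⁻¹ i j * t j k) = (1 : Matrix (Fin m) (Fin m) F) i k := by
      rw [← Matrix.mul_apply, ht']
    calc ((Matrix.of fun i j => t⁻¹ i j • d⁻¹) * (Matrix.of fun i j => t i j • d)) i k
        = ∑ j, (t⁻¹ i j • d⁻¹) * (t j k • d) := by simp [Matrix.mul_apply]
      _ = ∑ j, (t⁻¹ i j * t j k) • (d⁻¹ * d) := by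
          refine Finset.sum_congr rfl fun j _ => ?_
          rw [smul_mul_smul_comm]
      _ = (∑ j, (t⁻¹ i j * t j k)) • (1 : D) := by rw [← Finset.sum_smul, hdd]
      _ = (1 : Matrix (Fin m) (Fin m) D) i k := by
          rw [hsum]
          by_cases h : i = k <;> simp [Matrix.one_apply, h]
  refine ⟨d, hd0, ?_, ?_, ?_⟩
  · simpa [g, tensL, LinearMap.mem_ker, LinearMap.mulLeft] using hg
  · simpa [f, tensL, LinearMap.mem_ker] using hf
  · rw [mul_assoc, hXY, mul_one]
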